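/- Alternation lemma: Let G and H be qf-stable groups and let w(x̄, ȳ) = u_1(x̄^{ε_1}, ȳ^{ε_1}) ⋯ u_ℓ(x̄^{ε_ℓ}, ȳ^{ε_ℓ}) be a group word whose variables are separated into G-variables and H-variables, with the ε_k alternating between G and H. Then there exists n (depending only on this decomposition of w) bounding the set of m for which there exist tuples ā_i = (ā_i^G, ā_i^H) and b̄_j = (b̄_j^G, b̄_j^H), 1 ≤ i,j ≤ m, with ā_i^G, b̄_j^G tuples from G and ā_i^H, b̄_j^H tuples from H, such that w(ā_i, b̄_j) = 1 in G ∗ H iff i ≤ j. -/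

import Mathlib

open Monoid

open Monoid

namespace AltLemma

set_option linter.unusedSectionVars false

section Words

variable {A B : Type*} [Mul A] [Mul B]

/-- merge two letters of the same sort (junk value if sorts differ). -/
def mulW : A ⊕ B → A ⊕ B → A ⊕ B
  | .inl u, .inl v => .inl (u*v)
  | .inr u, .inr v => .inr (u*v)
  | x, _ => x

@[simp] lemma mulW_isLeft (x y : A ⊕ B) : (mulW x y).isLeft = x.isLeft := by
  cases x <;> cases y <;> rfl

/-- glue a prefix `L` and suffix `M` after removing a middle letter:
merge the last letter of `L` with the first of `M`. -/
def glue : List (A ⊕ B) → List (A ⊕ B) → List (A ⊕ B)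
  | L, [] => L
  | L, b :: B' =>
    match L.getLast? with
    | none => b :: B'
    | some a => L.dropLast ++ mulW a b :: B'

lemma glue_length (L M : List (A ⊕ B)) : (glue L M).length ≤ L.length + M.length := by
  match M with
  | [] => simp [glue]
  | b :: B' =>
    rw [glue]
    rcases h : L.getLast? with _ | a
    · simp
    · simp only [List.length_append, List.length_cons, List.length_dropLast]
      have : L ≠ [] := by rintro rfl; simp at h
      have : 1 ≤ L.length := List.length_pos_iff.2 this
      omega

lemma glue_lt {L : List (A ⊕ B)} {k : ℕ} (hk : k < L.length) :
    (glue (L.take k) (L.drop (k+1))).length < L.length := by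
  have := glue_length (L.take k) (L.drop (k+1))
  rw [List.length_take, List.length_drop] at this
  omega

/-- the alternation property for a list of letters -/
def Alt (L : List (A ⊕ B)) : Prop := L.IsChain (fun x y => x.isLeft ≠ y.isLeft)

lemma hsplit_lemma {L : List (A ⊕ B)} {k : ℕ} (hk : k < L.length) :
    L = L.take k ++ L[k] :: L.drop (k+1) := by
  conv_lhs => rw [← List.take_append_drop k L]
  rw [List.drop_eq_getElem_cons hk]

lemma alt_glue {L M : List (A ⊕ B)} {x : A ⊕ B} (h : Alt (L ++ x :: M)) :
    Alt (glue L M) := by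
  rw [Alt, List.isChain_append] at h
  obtain ⟨h1, h2, h3⟩ := h
  rw [List.isChain_cons] at h2
  match M with
  | [] => exact h1
  | b :: B' =>
    rw [glue]
    rcases hL : L.getLast? with _ | a
    · exact h2.2
    · have hLne : L ≠ [] := by rintro rfl; simp at hL
      rw [Alt, List.isChain_append]
      refine ⟨h1.prefix ⟨[a], List.dropLast_append_getLast? _ hL⟩, ?_, ?_⟩
      · rw [List.isChain_cons]
        refine ⟨?_, (h2.2).tail⟩
        intro y hy
        have hxb : x.isLeft ≠ b.isLeft := h2.1 b rfl
        have hax : a.isLeft ≠ x.isLeft := h3 a hL x rfl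
        have hby : b.isLeft ≠ y.isLeft := by
          rw [List.isChain_cons] at h2
          exact h2.2.1 y hy
        simp only [mulW_isLeft]
        intro hcon
        apply hby
        rw [← hcon]
        revert hax hxb
        cases a.isLeft <;> cases x.isLeft <;> cases b.isLeft <;> simp
      · intro p hp q hq
        simp only [List.head?_cons, Option.mem_def, Option.some.injEq] at hq
        subst hq
        simp only [mulW_isLeft]
        have hLd : L = L.dropLast ++ [a] := (List.dropLast_append_getLast? _ hL).symm
        have h1' := h1
        rw [hLd, List.isChain_append] at h1'
        exact h1'.2.2 p hp a rfl

lemma alt_junction {L M : List (A ⊕ B)} {x : A ⊕ B} (h : Alt (L ++ x :: M))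
    {a b : A ⊕ B} (ha : a ∈ L.getLast?) (hb : b ∈ M.head?) : a.isLeft = b.isLeft := by
  rw [Alt, List.isChain_append] at h
  obtain ⟨h1, h2, h3⟩ := h
  rw [List.isChain_cons] at h2
  have hax : a.isLeft ≠ x.isLeft := h3 a ha x rfl
  have hxb : x.isLeft ≠ b.isLeft := h2.1 b hb
  revert hax hxb
  cases a.isLeft <;> cases x.isLeft <;> cases b.isLeft <;> simp

/-- All "cancellation patterns" for a list of alternating words. -/
def pats : List (A ⊕ B) → List (List (A ⊕ B))
  | [] => [[]]
  | x :: L' =>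
    (List.range (x :: L').length).flatMap fun k =>
      if hk : k < (x :: L').length then
        (pats (glue ((x :: L').take k) ((x :: L').drop (k+1)))).map ((x :: L')[k] :: ·)
      else []
termination_by L => L.length
decreasing_by exact glue_lt hk

lemma mem_pats_iff {L : List (A ⊕ B)} (hL : L ≠ []) (P : List (A ⊕ B)) :
    P ∈ pats L ↔ ∃ (k : ℕ) (hk : k < L.length) (P' : List (A ⊕ B)),
      P' ∈ pats (glue (L.take k) (L.drop (k+1))) ∧ P = L[k] :: P' := by
  match L with
  | [] => exact absurd rfl hL
  | x :: L' =>
    rw [pats]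
    simp only [List.mem_flatMap, List.mem_range]
    constructor
    · rintro ⟨k, hk, hP⟩
      rw [dif_pos hk] at hP
      simp only [List.mem_map] at hP
      obtain ⟨P', hP', rfl⟩ := hP
      exact ⟨k, hk, P', hP', rfl⟩
    · rintro ⟨k, hk, P', hP', rfl⟩
      refine ⟨k, hk, ?_⟩
      rw [dif_pos hk]
      simp only [List.mem_map]
      exact ⟨P', hP', rfl⟩

lemma pats_nonempty (L : List (A ⊕ B)) : ∃ P, P ∈ pats L := by
  have key : ∀ (n : ℕ) (L : List (A ⊕ B)), L.length = n → ∃ P, P ∈ pats L := by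
    intro n
    induction n using Nat.strong_induction_on with
    | _ n ih =>
      intro L hn
      rcases eq_or_ne L [] with rfl | hL
      · exact ⟨[], by simp [pats]⟩
      · have hlen : 0 < L.length := List.length_pos_iff.2 hL
        obtain ⟨P', hP'⟩ := ih (glue (L.take 0) (L.drop 1)).length
          (by rw [← hn]; exact glue_lt hlen) _ rfl
        exact ⟨L[0] :: P', (mem_pats_iff hL _).2 ⟨0, hlen, P', hP', rfl⟩⟩
  exact key L.length L rfl

lemma mem_pats_ne_nil {L : List (A ⊕ B)} (hL : L ≠ []) {P : List (A ⊕ B)}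
    (hP : P ∈ pats L) : P ≠ [] := by
  obtain ⟨k, hk, P', _, rfl⟩ := (mem_pats_iff hL _).1 hP
  simp

lemma alt_ofFn {n : ℕ} (g : Fin n → A ⊕ B)
    (hg : ∀ (i : ℕ) (h : i + 1 < n),
      (g ⟨i, by omega⟩).isLeft ≠ (g ⟨i+1, h⟩).isLeft) : Alt (List.ofFn g) := by
  rw [Alt, List.isChain_iff_getElem]
  intro i hi
  rw [List.length_ofFn] at hi
  rw [List.getElem_ofFn, List.getElem_ofFn]
  exact hg i (by omega)

end Words

section Eval

variable {A B : Type*} [Group A] [Group B] {G : Type u} {H : Type v} [Group G] [Group H]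

/-- evaluation of a letter in the binary coproduct -/
def EW (φ : A →* G) (ψ : B →* H) : A ⊕ B → Coprod G H :=
  Sum.elim (fun u => Coprod.inl (φ u)) (fun v => Coprod.inr (ψ v))

lemma EW_mulW (φ : A →* G) (ψ : B →* H) {x y : A ⊕ B} (h : x.isLeft = y.isLeft) :
    EW φ ψ (mulW x y) = EW φ ψ x * EW φ ψ y := by
  cases x <;> cases y <;> simp_all [EW, mulW, map_mul]

/-- the Bool-indexed family used to compare `Coprod` with `CoprodI` -/
abbrev FB (G : Type u) (H : Type v) : Bool → Type (max u v) :=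
  fun b => cond b (ULift.{v} G) (ULift.{u} H)

instance : (b : Bool) → Group (FB G H b)
  | true => inferInstanceAs (Group (ULift G))
  | false => inferInstanceAs (Group (ULift H))

def toCoprodI : Coprod G H →* CoprodI (FB G H) :=
  Coprod.lift
    ((CoprodI.of (i := true)).comp (MulEquiv.ulift.symm : G ≃* ULift G).toMonoidHom)
    ((CoprodI.of (i := false)).comp (MulEquiv.ulift.symm : H ≃* ULift H).toMonoidHom)

def letter (φ : A →* G) (ψ : B →* H) : A ⊕ B → Σ b, FB G H b :=
  Sum.elim (fun u => ⟨true, ULift.up (φ u)⟩) (fun v => ⟨false, ULift.up (ψ v)⟩)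

lemma toCoprodI_EW (φ : A →* G) (ψ : B →* H) (x : A ⊕ B) :
    toCoprodI (EW φ ψ x) = CoprodI.of (letter φ ψ x).2 := by
  cases x <;>
    · simp only [toCoprodI, EW, letter, Sum.elim_inl, Sum.elim_inr,
        Coprod.lift_apply_inl, Coprod.lift_apply_inr, MonoidHom.comp_apply]
      rfl

lemma letter_fst (φ : A →* G) (ψ : B →* H) (x : A ⊕ B) :
    (letter φ ψ x).1 = x.isLeft := by cases x <;> rfl

/-- a nonempty alternating word with nontrivial letters has nontrivial product -/
lemma prod_ne_one (φ : A →* G) (ψ : B →* H) {L : List (A ⊕ B)} (hL : L ≠ [])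
    (halt : Alt L) (hne : ∀ x ∈ L, EW φ ψ x ≠ 1) :
    (L.map (EW φ ψ)).prod ≠ 1 := by
  classical
  intro hcon
  set w : CoprodI.Word (FB G H) :=
    { toList := L.map (letter φ ψ)
      ne_one := by
        intro l hl
        simp only [List.mem_map] at hl
        obtain ⟨x, hx, rfl⟩ := hl
        intro h1
        apply hne x hx
        cases x with
        | inl u =>
          simp only [letter, Sum.elim_inl] at h1
          have : φ u = 1 := congrArg ULift.down h1
          simp [EW, this]
        | inr v =>
          simp only [letter, Sum.elim_inr] at h1
          have : ψ v = 1 := congrArg ULift.down h1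
          simp [EW, this]
      chain_ne := by
        rw [List.isChain_map]
        refine halt.imp ?_
        intro x y h
        simp only [letter_fst]
        exact fun hc => h (by rw [hc]) } with hw
  have hprod : w.prod = 1 := by
    have h1 : toCoprodI ((L.map (EW φ ψ)).prod) = 1 := by rw [hcon, map_one]
    rw [map_list_prod, List.map_map] at h1
    rw [CoprodI.Word.prod, hw, List.map_map, ← h1]
    congr 1
    apply List.map_congr_left
    intro x _
    exact (toCoprodI_EW φ ψ x).symm
  have hempty : w = CoprodI.Word.empty := by
    have h1 : CoprodI.Word.equiv w.prod = w := by
      have := CoprodI.Word.equiv.apply_symm_apply w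
      rwa [show CoprodI.Word.equiv.symm w = w.prod from rfl] at this
    have h2 : CoprodI.Word.equiv (CoprodI.Word.empty : CoprodI.Word (FB G H)).prod
        = CoprodI.Word.empty := by
      have := CoprodI.Word.equiv.apply_symm_apply
        (CoprodI.Word.empty : CoprodI.Word (FB G H))
      rwa [show CoprodI.Word.equiv.symm (CoprodI.Word.empty : CoprodI.Word (FB G H)) =
        (CoprodI.Word.empty : CoprodI.Word (FB G H)).prod from rfl] at this
    rw [hprod] at h1
    rw [CoprodI.Word.prod_empty] at h2
    rw [← h1, h2]
  apply hL
  have : L.map (letter φ ψ) = [] := congrArg CoprodI.Word.toList hempty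
  exact List.map_eq_nil_iff.1 this

lemma glue_prod (φ : A →* G) (ψ : B →* H) {L M : List (A ⊕ B)}
    (hj : ∀ a ∈ L.getLast?, ∀ b ∈ M.head?, a.isLeft = b.isLeft) :
    ((glue L M).map (EW φ ψ)).prod = (L.map (EW φ ψ)).prod * (M.map (EW φ ψ)).prod := by
  match M with
  | [] => simp [glue]
  | b :: M' =>
    rw [glue]
    rcases hL : L.getLast? with _ | a
    · have : L = [] := List.getLast?_eq_none_iff.1 hL
      subst this
      simp
    · have hLd : L.dropLast ++ [a] = L := List.dropLast_append_getLast? _ hL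
      have hsort : a.isLeft = b.isLeft := hj a hL b rfl
      calc ((L.dropLast ++ mulW a b :: M').map (EW φ ψ)).prod
          = (L.dropLast.map (EW φ ψ)).prod * (EW φ ψ (mulW a b) *
            (M'.map (EW φ ψ)).prod) := by
            simp [List.prod_append]
        _ = (L.dropLast.map (EW φ ψ)).prod * (EW φ ψ a * (EW φ ψ b *
            (M'.map (EW φ ψ)).prod)) := by rw [EW_mulW φ ψ hsort, mul_assoc]
        _ = (L.map (EW φ ψ)).prod * ((b :: M').map (EW φ ψ)).prod := by
            rw [← hLd]
            simp [List.prod_append, mul_assoc]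

/-- the characterization of triviality of an alternating product by patterns -/
lemma char (φ : A →* G) (ψ : B →* H) {L : List (A ⊕ B)} (hAlt : Alt L) :
    (L.map (EW φ ψ)).prod = 1 ↔ ∃ P ∈ pats L, ∀ x ∈ P, EW φ ψ x = 1 := by
  have key : ∀ (n : ℕ) (L : List (A ⊕ B)), L.length = n → Alt L →
      ((L.map (EW φ ψ)).prod = 1 ↔ ∃ P ∈ pats L, ∀ x ∈ P, EW φ ψ x = 1) := by
    intro n
    induction n using Nat.strong_induction_on with
    | _ n ih =>
      intro L hn hAlt
      rcases eq_or_ne L [] with rfl | hL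
      · simp [pats]
      constructor
      · intro hone
        -- find a trivial letter
        have hex : ∃ (k : ℕ) (hk : k < L.length), EW φ ψ L[k] = 1 := by
          by_contra hno
          push_neg at hno
          refine prod_ne_one φ ψ hL hAlt ?_ hone
          intro x hx
          obtain ⟨k, hk, rfl⟩ := List.mem_iff_getElem.1 hx
          exact hno k hk
        obtain ⟨k, hk, hk1⟩ := hex
        have hsp := hsplit_lemma hk
        have hAlt' : Alt (L.take k ++ L[k] :: L.drop (k+1)) := by rw [← hsp]; exact hAlt
        have hj : ∀ a ∈ (L.take k).getLast?, ∀ b ∈ (L.drop (k+1)).head?,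
            a.isLeft = b.isLeft := fun a ha b hb => alt_junction hAlt' ha hb
        have hglue : ((glue (L.take k) (L.drop (k+1))).map (EW φ ψ)).prod = 1 := by
          rw [glue_prod φ ψ hj]
          have : (L.map (EW φ ψ)).prod = ((L.take k).map (EW φ ψ)).prod *
              (EW φ ψ L[k] * ((L.drop (k+1)).map (EW φ ψ)).prod) := by
            conv_lhs => rw [hsp]
            rw [List.map_append, List.prod_append, List.map_cons, List.prod_cons]
          rw [this, hk1, one_mul] at hone
          exact hone
        obtain ⟨P', hP', hPT⟩ := (ih (glue (L.take k) (L.drop (k+1))).length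
          (by rw [← hn]; exact glue_lt hk) _ rfl (alt_glue hAlt')).1 hglue
        refine ⟨L[k] :: P', (mem_pats_iff hL _).2 ⟨k, hk, P', hP', rfl⟩, ?_⟩
        intro x hx
        rcases List.mem_cons.1 hx with rfl | hx
        · exact hk1
        · exact hPT x hx
      · rintro ⟨P, hP, hPT⟩
        obtain ⟨k, hk, P', hP', rfl⟩ := (mem_pats_iff hL _).1 hP
        have hsp := hsplit_lemma hk
        have hAlt' : Alt (L.take k ++ L[k] :: L.drop (k+1)) := by rw [← hsp]; exact hAlt
        have hj : ∀ a ∈ (L.take k).getLast?, ∀ b ∈ (L.drop (k+1)).head?,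
            a.isLeft = b.isLeft := fun a ha b hb => alt_junction hAlt' ha hb
        have hglue : ((glue (L.take k) (L.drop (k+1))).map (EW φ ψ)).prod = 1 :=
          (ih (glue (L.take k) (L.drop (k+1))).length
            (by rw [← hn]; exact glue_lt hk) _ rfl (alt_glue hAlt')).2
            ⟨P', hP', fun x hx => hPT x (List.mem_cons_of_mem _ hx)⟩
        rw [glue_prod φ ψ hj] at hglue
        have hk1 : EW φ ψ L[k] = 1 := hPT _ List.mem_cons_self
        conv_lhs => rw [hsp]
        rw [List.map_append, List.prod_append, List.map_cons, List.prod_cons, hk1, one_mul]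
        exact hglue
  exact key L.length L rfl hAlt

end Eval


/-- greedy prehomogeneous sequence extraction -/
lemma greedy {β : Type*} [LinearOrder β] {α : Type*} [Fintype α] [Nonempty α]
    (c : β → β → α) :
    ∀ (K : ℕ) (s : Finset β), (Fintype.card α + 1)^K ≤ s.card →
    ∃ (l : List β) (e : β → α), l.length = K ∧ (∀ x ∈ l, x ∈ s) ∧
      l.Pairwise (fun x y => x < y ∧ c x y = e x) := by
  classical
  intro K
  induction K with
  | zero =>
    intro s _
    exact ⟨[], fun _ => Classical.arbitrary α, rfl, by simp, List.Pairwise.nil⟩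
  | succ K ihK =>
    intro s hs
    set A := Fintype.card α with hA
    have hsne : s.Nonempty := by
      rw [← Finset.card_pos]
      calc 0 < (A+1)^(K+1) := pow_pos (by omega) _
        _ ≤ s.card := hs
    set a := s.min' hsne with ha
    have hfib : ∃ b : α, (A+1)^K ≤ ((s.erase a).filter (fun x => c a x = b)).card := by
      by_contra hno
      push_neg at hno
      have hsum : (s.erase a).card =
          ∑ b : α, ((s.erase a).filter (fun x => c a x = b)).card :=
        Finset.card_eq_sum_card_fiberwise (fun x _ => Finset.mem_univ _)
      have hle : ∑ b : α, ((s.erase a).filter (fun x => c a x = b)).card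
          ≤ A * ((A+1)^K - 1) := by
        calc ∑ b : α, ((s.erase a).filter (fun x => c a x = b)).card
            ≤ ∑ _b : α, ((A+1)^K - 1) := by
              apply Finset.sum_le_sum
              intro b _
              have := hno b
              omega
          _ = A * ((A+1)^K - 1) := by
              rw [Finset.sum_const, Finset.card_univ, smul_eq_mul]
      have hcard : (s.erase a).card = s.card - 1 := by
        rw [Finset.card_erase_of_mem (s.min'_mem hsne)]
      have hA1 : 1 ≤ A := Fintype.card_pos
      have hP : 1 ≤ (A+1)^K := Nat.one_le_pow _ _ (by omega)
      have hpow : (A+1)^(K+1) = (A+1) * (A+1)^K := pow_succ' (A+1) K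
      have e1 : (A+1) * (A+1)^K = A * (A+1)^K + (A+1)^K := by ring
      have e2 : A * (A+1)^K = A * ((A+1)^K - 1) + A := by
        have h' : (A+1)^K - 1 + 1 = (A+1)^K := by omega
        calc A * (A+1)^K = A * ((A+1)^K - 1 + 1) := by rw [h']
          _ = A * ((A+1)^K - 1) + A := by ring
      omega
    obtain ⟨b, hb⟩ := hfib
    obtain ⟨l', e', hlen, hmem, hpair⟩ := ihK _ hb
    refine ⟨a :: l', Function.update e' a b, by simp [hlen], ?_, ?_⟩
    · intro x hx
      rcases List.mem_cons.1 hx with rfl | hx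
      · exact s.min'_mem hsne
      · exact Finset.mem_of_mem_erase (Finset.mem_of_mem_filter _ (hmem x hx))
    · rw [List.pairwise_cons]
      constructor
      · intro y hy
        have hyt := hmem y hy
        rw [Finset.mem_filter] at hyt
        obtain ⟨hy1, hy2⟩ := hyt
        have hya : y ≠ a := (Finset.mem_erase.1 hy1).1
        have hys : y ∈ s := (Finset.mem_erase.1 hy1).2
        refine ⟨lt_of_le_of_ne (s.min'_le y hys) (Ne.symm hya), ?_⟩
        rw [Function.update_self, hy2]
      · refine hpair.imp_of_mem ?_
        intro x y hx _ hxy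
        have hxt := hmem x hx
        rw [Finset.mem_filter, Finset.mem_erase] at hxt
        refine ⟨hxy.1, ?_⟩
        rw [Function.update_of_ne hxt.1.1, hxy.2]

lemma pairwise_rel_of_lt {β : Type*} [Preorder β] {l : List β} {R : β → β → Prop}
    (h : l.Pairwise (fun x y => x < y ∧ R x y)) {x y : β}
    (hx : x ∈ l) (hy : y ∈ l) (hxy : x < y) : R x y := by
  obtain ⟨i, hi, rfl⟩ := List.mem_iff_getElem.1 hx
  obtain ⟨j, hj, rfl⟩ := List.mem_iff_getElem.1 hy
  have hp := List.pairwise_iff_getElem.1 h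
  rcases lt_trichotomy i j with hij | rfl | hij
  · exact (hp i j hi hj hij).2
  · exact absurd hxy (lt_irrefl _)
  · exact absurd (hp j i hj hi hij).1 (asymm hxy)

/-- monochromatic ordered Ramsey for pairs, greedy + pigeonhole version -/
lemma ramsey_pairs {β : Type*} [LinearOrder β] {α : Type*} [Fintype α] [Nonempty α]
    (c : β → β → α) (nn : ℕ) (s : Finset β)
    (hcard : (Fintype.card α + 1)^(Fintype.card α * nn + 1) ≤ s.card) :
    ∃ (l : List β) (d : α), l.length = nn ∧
      l.Pairwise (fun x y => x < y ∧ c x y = d) := by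
  classical
  obtain ⟨l, e, hlen, hmem, hpair⟩ := greedy c (Fintype.card α * nn + 1) s hcard
  have hnodup : l.Nodup := hpair.imp (fun h => ne_of_lt h.1)
  -- pigeonhole: some color class in l has ≥ nn elements
  have hfib : ∃ d : α, nn ≤ (l.toFinset.filter (fun x => e x = d)).card := by
    by_contra hno
    push_neg at hno
    have hsum : l.toFinset.card = ∑ d : α, (l.toFinset.filter (fun x => e x = d)).card :=
      Finset.card_eq_sum_card_fiberwise (fun x _ => Finset.mem_univ _)
    have hle : ∑ d : α, (l.toFinset.filter (fun x => e x = d)).card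
        ≤ Fintype.card α * (nn - 1) := by
      calc ∑ d : α, (l.toFinset.filter (fun x => e x = d)).card
          ≤ ∑ _d : α, (nn - 1) := by
            apply Finset.sum_le_sum
            intro d _
            have := hno d
            omega
        _ = Fintype.card α * (nn - 1) := by
            rw [Finset.sum_const, Finset.card_univ, smul_eq_mul]
    have htc : l.toFinset.card = Fintype.card α * nn + 1 := by
      rw [List.toFinset_card_of_nodup hnodup, hlen]
    rcases Nat.eq_zero_or_pos nn with rfl | hnn
    · have := hno (Classical.arbitrary α)
      omega
    · have e3 : Fintype.card α * nn = Fintype.card α * (nn - 1) + Fintype.card α := by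
        have h' : nn - 1 + 1 = nn := by omega
        calc Fintype.card α * nn = Fintype.card α * (nn - 1 + 1) := by rw [h']
          _ = Fintype.card α * (nn - 1) + Fintype.card α := by ring
      omega
  obtain ⟨d, hd⟩ := hfib
  set T := l.toFinset.filter (fun x => e x = d) with hT
  set l2 := (T.sort (· ≤ ·)).take nn with hl2
  have hl2len : l2.length = nn := by
    rw [hl2, List.length_take, Finset.length_sort]
    omega
  have hl2mem : ∀ x ∈ l2, x ∈ T := by
    intro x hx
    have : x ∈ T.sort (· ≤ ·) := List.mem_of_mem_take hx
    rwa [Finset.mem_sort] at this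
  have hl2sorted : l2.Pairwise (· < ·) :=
    (Finset.sortedLT_sort T).pairwise.sublist (List.take_sublist _ _)
  refine ⟨l2, d, hl2len, ?_⟩
  refine hl2sorted.imp_of_mem ?_
  intro x y hx hy hxy
  have hxT := hl2mem x hx
  have hyT := hl2mem y hy
  rw [hT, Finset.mem_filter, List.mem_toFinset] at hxT hyT
  refine ⟨hxy, ?_⟩
  rw [pairwise_rel_of_lt hpair hxT.1 hyT.1 hxy, hxT.2]

end AltLemma


/-- A group `G` is qf-stable if every group-word equation `w(x̄, ȳ) = 1` defines a
stable relation on tuples from `G`. -/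
def QFStable (G : Type*) [Group G] : Prop :=
  ∀ (p q : ℕ) (w : FreeGroup (Fin p ⊕ Fin q)), ∃ n : ℕ, ∀ m : ℕ,
    (∃ (a : Fin m → Fin p → G) (b : Fin m → Fin q → G),
      ∀ i j, FreeGroup.lift (Sum.elim (a i) (b j)) w = 1 ↔ i ≤ j) → m ≤ n

/-- **Alternation lemma.** Let `G`, `H` be qf-stable groups and let
`w = u_1 ⋯ u_ℓ` be a group word whose variables are separated into `G`-variables
(`x̄^G` of length `pG`, `ȳ^G` of length `qG`) and `H`-variables (`x̄^H` of length
`pH`, `ȳ^H` of length `qH`), each subword `u_k` involving only the variables of the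
sort `ε_k`, with the sorts `ε_k` alternating between `G` and `H` (`ε k = true`
meaning sort `G`). Then there exists `n` (depending only on this decomposition of
`w`) bounding the `m` for which there exist tuples
`ā_i = (ā_i^G, ā_i^H)`, `b̄_j = (b̄_j^G, b̄_j^H)` with `ā_i^G, b̄_j^G` from `G` and
`ā_i^H, b̄_j^H` from `H` such that `w(ā_i, b̄_j) = 1` in `G ∗ H` iff `i ≤ j`. -/
theorem alternation_lemma {G H : Type*} [Group G] [Group H]
    (hG : QFStable G) (hH : QFStable H)
    (pG pH qG qH ℓ : ℕ) (hℓ : 1 ≤ ℓ) (ε : Fin ℓ → Bool)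
    (halt : ∀ k : Fin (ℓ - 1), ε (Fin.castLE (by omega) k) ≠
      ε (⟨k.val + 1, by omega⟩ : Fin ℓ))
    (uG : Fin ℓ → FreeGroup (Fin pG ⊕ Fin qG))
    (uH : Fin ℓ → FreeGroup (Fin pH ⊕ Fin qH)) :
    ∃ n : ℕ, ∀ m : ℕ,
      (∃ (aG : Fin m → Fin pG → G) (aH : Fin m → Fin pH → H)
        (bG : Fin m → Fin qG → G) (bH : Fin m → Fin qH → H),
        ∀ i j,
          (List.ofFn (fun k : Fin ℓ =>
            if ε k then
              Coprod.inl (FreeGroup.lift (Sum.elim (aG i) (bG j)) (uG k))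
            else
              (Coprod.inr (FreeGroup.lift (Sum.elim (aH i) (bH j)) (uH k)) :
                Coprod G H))).prod = 1 ↔ i ≤ j) → m ≤ n := by
  classical
  set Lw : List (FreeGroup (Fin pG ⊕ Fin qG) ⊕ FreeGroup (Fin pH ⊕ Fin qH)) :=
    List.ofFn (fun k : Fin ℓ => if ε k then Sum.inl (uG k) else Sum.inr (uH k))
    with hLwdef
  have hLwlen : Lw.length = ℓ := by rw [hLwdef, List.length_ofFn]
  have hLw_ne : Lw ≠ [] := by
    intro h
    rw [h] at hLwlen
    simp at hLwlen
    omega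
  have hAlt : AltLemma.Alt Lw := by
    rw [hLwdef]
    apply AltLemma.alt_ofFn
    intro i hi
    have hgl : ∀ (p : ℕ) (hp : p < ℓ),
        ((if ε ⟨p, hp⟩ then Sum.inl (uG ⟨p, hp⟩) else
          Sum.inr (uH ⟨p, hp⟩)) : FreeGroup (Fin pG ⊕ Fin qG) ⊕
            FreeGroup (Fin pH ⊕ Fin qH)).isLeft = ε ⟨p, hp⟩ := by
      intro p hp
      rcases Bool.eq_false_or_eq_true (ε ⟨p, hp⟩) with h | h
      · rw [if_pos (by simp [h]), h]
        rfl
      · rw [if_neg (by simp [h]), h]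
        rfl
    have h3 := halt ⟨i, by omega⟩
    intro hcon
    apply h3
    have e1 : (Fin.castLE (by omega : ℓ - 1 ≤ ℓ) (⟨i, by omega⟩ : Fin (ℓ - 1)))
        = (⟨i, by omega⟩ : Fin ℓ) := rfl
    rw [e1]
    rw [hgl i (by omega), hgl (i+1) hi] at hcon
    exact hcon
  -- nonemptiness facts
  obtain ⟨P0, hP0⟩ := AltLemma.pats_nonempty Lw
  have hN : 0 < (AltLemma.pats Lw).length := List.length_pos_iff.2 (List.ne_nil_of_mem hP0)
  have hlenpos : ∀ t : Fin (AltLemma.pats Lw).length,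
      0 < ((AltLemma.pats Lw).get t).length := fun t =>
    List.length_pos_iff.2 (AltLemma.mem_pats_ne_nil hLw_ne (List.get_mem _ t))
  haveI hCne : Nonempty (Fin (AltLemma.pats Lw).length ×
      ((t : Fin (AltLemma.pats Lw).length) → Fin ((AltLemma.pats Lw).get t).length)) :=
    ⟨⟨⟨0, hN⟩, fun t => ⟨0, hlenpos t⟩⟩⟩
  set CC := Fintype.card (Fin (AltLemma.pats Lw).length ×
      ((t : Fin (AltLemma.pats Lw).length) → Fin ((AltLemma.pats Lw).get t).length))
    with hCC
  set bnd : FreeGroup (Fin pG ⊕ Fin qG) ⊕ FreeGroup (Fin pH ⊕ Fin qH) → ℕ :=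
    Sum.elim (fun u => (hG pG qG u).choose) (fun v => (hH pH qH v).choose) with hbnd
  set B1 := ((AltLemma.pats Lw).flatten.map bnd).sum with hB1
  refine ⟨(CC + 1)^(CC * (2 * (B1 + 1)) + 1), ?_⟩
  rintro m ⟨aG, aH, bG, bH, hlad⟩
  by_contra hm
  push_neg at hm
  set φ : Fin m → Fin m → (FreeGroup (Fin pG ⊕ Fin qG) →* G) :=
    fun i j => FreeGroup.lift (Sum.elim (aG i) (bG j)) with hφ
  set ψ : Fin m → Fin m → (FreeGroup (Fin pH ⊕ Fin qH) →* H) :=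
    fun i j => FreeGroup.lift (Sum.elim (aH i) (bH j)) with hψ
  have hchar : ∀ i j : Fin m,
      (∃ P ∈ AltLemma.pats Lw, ∀ w ∈ P, AltLemma.EW (φ i j) (ψ i j) w = 1) ↔ i ≤ j := by
    intro i j
    rw [← AltLemma.char (φ i j) (ψ i j) hAlt]
    have hmap : Lw.map (AltLemma.EW (φ i j) (ψ i j)) = List.ofFn (fun k : Fin ℓ =>
        if ε k then
          Coprod.inl (FreeGroup.lift (Sum.elim (aG i) (bG j)) (uG k))
        else
          (Coprod.inr (FreeGroup.lift (Sum.elim (aH i) (bH j)) (uH k)) : Coprod G H)) := by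
      rw [hLwdef, List.map_ofFn]
      apply congrArg
      funext k
      rcases Bool.eq_false_or_eq_true (ε k) with h | h
      · simp only [Function.comp_apply]
        rw [if_pos (by simp [h]), if_pos (by simp [h])]
        rfl
      · simp only [Function.comp_apply]
        rw [if_neg (by simp [h]), if_neg (by simp [h])]
        rfl
    rw [hmap]
    exact hlad i j
  -- choice of satisfied pattern for i ≤ j
  have hsat : ∀ x y : Fin m, ∃ t : Fin (AltLemma.pats Lw).length,
      x ≤ y → ∀ w ∈ (AltLemma.pats Lw).get t, AltLemma.EW (φ x y) (ψ x y) w = 1 := by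
    intro x y
    by_cases hxy : x ≤ y
    · obtain ⟨P, hP, hPT⟩ := (hchar x y).2 hxy
      obtain ⟨t, ht⟩ := List.get_of_mem hP
      refine ⟨t, fun _ => ?_⟩
      rw [ht]
      exact hPT
    · exact ⟨⟨0, hN⟩, fun h => absurd h hxy⟩
  choose c1 hc1 using hsat
  -- choice of failed equation for each pattern for y > x
  have hfail : ∀ x y : Fin m, ∀ t : Fin (AltLemma.pats Lw).length,
      ∃ s : Fin ((AltLemma.pats Lw).get t).length,
      x < y → ¬ (AltLemma.EW (φ y x) (ψ y x) (((AltLemma.pats Lw).get t).get s) = 1) := by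
    intro x y t
    by_cases hxy : x < y
    · have hR : ¬ (y ≤ x) := not_le.2 hxy
      have hnall : ¬ ∀ w ∈ (AltLemma.pats Lw).get t,
          AltLemma.EW (φ y x) (ψ y x) w = 1 := by
        intro hall
        exact hR ((hchar y x).1 ⟨_, List.get_mem _ t, hall⟩)
      push_neg at hnall
      obtain ⟨w, hw, hwf⟩ := hnall
      obtain ⟨s, hs⟩ := List.get_of_mem hw
      refine ⟨s, fun _ => ?_⟩
      rw [hs]
      exact hwf
    · exact ⟨⟨0, hlenpos t⟩, fun h => absurd h hxy⟩
  choose c2 hc2 using hfail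
  obtain ⟨l, d, hllen, hlpair⟩ := AltLemma.ramsey_pairs
    (fun x y => ((c1 x y, c2 x y) : Fin (AltLemma.pats Lw).length ×
      ((t : Fin (AltLemma.pats Lw).length) → Fin ((AltLemma.pats Lw).get t).length)))
    (2 * (B1 + 1)) Finset.univ
    (by rw [Finset.card_univ, Fintype.card_fin, ← hCC]; omega)
  have hget := List.pairwise_iff_getElem.1 hlpair
  -- the distinguished equation
  set x0 := ((AltLemma.pats Lw).get d.1).get (d.2 d.1) with hx0def
  have claim : ∀ p q (hp : p < l.length) (hq : q < l.length), p < q →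
      (AltLemma.EW (φ (l[p]'hp) (l[q]'hq)) (ψ (l[p]'hp) (l[q]'hq)) x0 = 1) ∧
      ¬ (AltLemma.EW (φ (l[q]'hq) (l[p]'hp)) (ψ (l[q]'hq) (l[p]'hp)) x0 = 1) := by
    intro p q hp hq hpq
    obtain ⟨hlt, hcol⟩ := hget p q hp hq hpq
    have h1 : c1 (l[p]'hp) (l[q]'hq) = d.1 := congrArg Prod.fst hcol
    have h2 : c2 (l[p]'hp) (l[q]'hq) d.1 = d.2 d.1 := by
      have := congrArg Prod.snd hcol
      exact congrFun this d.1
    constructor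
    · have hspec := hc1 (l[p]'hp) (l[q]'hq) (le_of_lt hlt)
      rw [h1] at hspec
      exact hspec x0 (by rw [hx0def]; exact List.get_mem _ _)
    · have hspec := hc2 (l[p]'hp) (l[q]'hq) d.1 hlt
      rw [h2] at hspec
      exact hspec
  -- bound on the stability index of x0
  have hx0mem : x0 ∈ (AltLemma.pats Lw).flatten :=
    List.mem_flatten.2 ⟨_, List.get_mem _ d.1, List.get_mem _ _⟩
  have hbnd1 : bnd x0 ≤ B1 := by
    rw [hB1]
    exact List.single_le_sum (fun _ _ => Nat.zero_le _) _ (List.mem_map_of_mem (f := bnd) hx0mem)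
  have hll : l.length = 2 * (B1 + 1) := hllen
  -- build the ladder of length B1 + 1
  cases hx0 : x0 with
  | inl u =>
    have hfinal : B1 + 1 ≤ (hG pG qG u).choose := by
      apply (hG pG qG u).choose_spec (B1 + 1)
      refine ⟨fun r => aG (l[2 * r.1]'(by omega)),
              fun r => bG (l[2 * r.1 + 1]'(by omega)), ?_⟩
      intro r r'
      have hiff : ∀ (i j : Fin m),
          (AltLemma.EW (φ i j) (ψ i j) x0 = 1) ↔
          FreeGroup.lift (Sum.elim (aG i) (bG j)) u = 1 := by
        intro i j
        rw [hx0]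
        show (Coprod.inl (φ i j u) : Coprod G H) = 1 ↔ _
        constructor
        · intro h
          have h2 : φ i j u = 1 := Coprod.inl_injective (M := G) (N := H)
            (by rw [h, map_one])
          exact h2
        · intro h
          have h2 : φ i j u = 1 := h
          rw [h2, map_one]
      rcases le_or_gt r r' with hle | hlt
      · have hpq : 2 * r.1 < 2 * r'.1 + 1 := by omega
        have := (claim (2 * r.1) (2 * r'.1 + 1) (by omega) (by omega) hpq).1
        rw [hiff] at this
        exact ⟨fun _ => hle, fun _ => this⟩
      · have hpq : 2 * r'.1 + 1 < 2 * r.1 := by omega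
        have := (claim (2 * r'.1 + 1) (2 * r.1) (by omega) (by omega) hpq).2
        rw [hiff] at this
        exact ⟨fun hcon => absurd hcon this, fun hcon => absurd hcon (not_le.2 hlt)⟩
    have : bnd x0 = (hG pG qG u).choose := by rw [hx0, hbnd]; rfl
    omega
  | inr v =>
    have hfinal : B1 + 1 ≤ (hH pH qH v).choose := by
      apply (hH pH qH v).choose_spec (B1 + 1)
      refine ⟨fun r => aH (l[2 * r.1]'(by omega)),
              fun r => bH (l[2 * r.1 + 1]'(by omega)), ?_⟩
      intro r r'
      have hiff : ∀ (i j : Fin m),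
          (AltLemma.EW (φ i j) (ψ i j) x0 = 1) ↔
          FreeGroup.lift (Sum.elim (aH i) (bH j)) v = 1 := by
        intro i j
        rw [hx0]
        show (Coprod.inr (ψ i j v) : Coprod G H) = 1 ↔ _
        constructor
        · intro h
          have h2 : ψ i j v = 1 := Coprod.inr_injective (M := G) (N := H)
            (by rw [h, map_one])
          exact h2
        · intro h
          have h2 : ψ i j v = 1 := h
          rw [h2, map_one]
      rcases le_or_gt r r' with hle | hlt
      · have hpq : 2 * r.1 < 2 * r'.1 + 1 := by omega
        have := (claim (2 * r.1) (2 * r'.1 + 1) (by omega) (by omega) hpq).1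
        rw [hiff] at this
        exact ⟨fun _ => hle, fun _ => this⟩
      · have hpq : 2 * r'.1 + 1 < 2 * r.1 := by omega
        have := (claim (2 * r'.1 + 1) (2 * r.1) (by omega) (by omega) hpq).2
        rw [hiff] at this
        exact ⟨fun hcon => absurd hcon this, fun hcon => absurd hcon (not_le.2 hlt)⟩
    have : bnd x0 = (hH pH qH v).choose := by rw [hx0, hbnd]; rfl
    omega
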